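/- Let E be a d-dimensional real normed vector space. Let R = {p_1, …, p_n} be a set of n pairwise distinct points of E, let ρ_1, …, ρ_n > 0, and let K_i be the closed ball of radius ρ_i centered at p_i. Let B be another finite set of points of E and λ > 0 a real number, and assume that for every i one has |B ∩ K_i| ≥ λ·|R ∩ K_i|. Then λ·|R| ≤ 3^d·|B|, i.e., |B|/|R| ≥ λ/3^d. -/

import Mathlib

open Metric MeasureTheory Module Set
open scoped ENNReal

/-- Any `1`-separated set in the closed unit ball has cardinality at most `3 ^ dim`. -/
private theorem stmt3_pack {E : Type*} [NormedAddCommGroup E] [NormedSpace ℝ E]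
    [FiniteDimensional ℝ E]
    (s : Finset E) (hs : ∀ c ∈ s, ‖c‖ ≤ 1)
    (h : ∀ c ∈ s, ∀ d ∈ s, c ≠ d → 1 ≤ ‖c - d‖) : s.card ≤ 3 ^ finrank ℝ E := by
  borelize E
  let μ : Measure E := Measure.addHaar
  let δ : ℝ := (1 : ℝ) / 2
  let r : ℝ := (3 : ℝ) / 2
  have rpos : 0 < r := by norm_num
  set A := ⋃ c ∈ s, ball (c : E) δ with hA
  have D : Set.Pairwise (s : Set E) (Function.onFun Disjoint fun c => ball (c : E) δ) := by
    rintro c hc d hd hcd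
    apply ball_disjoint_ball
    rw [dist_eq_norm]
    convert h c hc d hd hcd
    norm_num
  have A_subset : A ⊆ ball (0 : E) r := by
    refine iUnion₂_subset fun x hx => ?_
    apply ball_subset_ball'
    calc
      δ + dist x 0 ≤ δ + 1 := by rw [dist_zero_right]; exact add_le_add le_rfl (hs x hx)
      _ = 3 / 2 := by norm_num
  have I :
    (s.card : ℝ≥0∞) * ENNReal.ofReal (δ ^ finrank ℝ E) * μ (ball 0 1) ≤
      ENNReal.ofReal (r ^ finrank ℝ E) * μ (ball 0 1) :=
    calc
      (s.card : ℝ≥0∞) * ENNReal.ofReal (δ ^ finrank ℝ E) * μ (ball 0 1) = μ A := by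
        rw [hA, measure_biUnion_finset D fun c _ => measurableSet_ball]
        have I : 0 < δ := by norm_num
        simp only [div_pow, μ.addHaar_ball_of_pos _ I]
        simp only [one_div, one_pow, Finset.sum_const, nsmul_eq_mul, mul_assoc]
      _ ≤ μ (ball (0 : E) r) := measure_mono A_subset
      _ = ENNReal.ofReal (r ^ finrank ℝ E) * μ (ball 0 1) := by
        simp only [μ.addHaar_ball_of_pos _ rpos]
  have J : (s.card : ℝ≥0∞) * ENNReal.ofReal (δ ^ finrank ℝ E) ≤ ENNReal.ofReal (r ^ finrank ℝ E) :=
    (ENNReal.mul_le_mul_iff_left (measure_ball_pos _ _ zero_lt_one).ne' measure_ball_lt_top.ne).1 I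
  have K : (s.card : ℝ) ≤ (3 : ℝ) ^ finrank ℝ E := by
    have := ENNReal.toReal_le_of_le_ofReal (pow_nonneg rpos.le _) J
    simpa [r, δ, div_eq_mul_inv, mul_pow] using this
  exact mod_cast K

private theorem stmt3_normalize_aux {E : Type*} [NormedAddCommGroup E] [NormedSpace ℝ E]
    {a c : E} {M : ℝ} (ha : a ≠ 0) (hac : ‖a‖ ≤ ‖c‖) (hcM : ‖c‖ ≤ M)
    (hd : M < ‖a - c‖) : 1 < ‖‖a‖⁻¹ • a - ‖c‖⁻¹ • c‖ := by
  have hna : (0:ℝ) < ‖a‖ := norm_pos_iff.2 ha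
  have hnc : (0:ℝ) < ‖c‖ := lt_of_lt_of_le hna hac
  have key : a - c = ‖a‖ • (‖a‖⁻¹ • a - ‖c‖⁻¹ • c) + (‖a‖ - ‖c‖) • (‖c‖⁻¹ • c) := by
    rw [smul_sub, smul_inv_smul₀ hna.ne', sub_smul, smul_inv_smul₀ hnc.ne']
    module
  have hw : ‖(‖c‖⁻¹ • c)‖ = 1 := by
    rw [norm_smul, Real.norm_eq_abs, abs_inv, abs_of_pos hnc, inv_mul_cancel₀ hnc.ne']
  have hb : ‖a - c‖ ≤ ‖a‖ * ‖‖a‖⁻¹ • a - ‖c‖⁻¹ • c‖ + (‖c‖ - ‖a‖) := by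
    calc ‖a - c‖ ≤ ‖‖a‖ • (‖a‖⁻¹ • a - ‖c‖⁻¹ • c)‖ + ‖(‖a‖ - ‖c‖) • (‖c‖⁻¹ • c)‖ := by
          rw [key]; exact norm_add_le _ _
      _ = ‖a‖ * ‖‖a‖⁻¹ • a - ‖c‖⁻¹ • c‖ + |‖a‖ - ‖c‖| * 1 := by
          rw [norm_smul, norm_smul, hw, Real.norm_eq_abs, Real.norm_eq_abs, abs_of_pos hna]
      _ = ‖a‖ * ‖‖a‖⁻¹ • a - ‖c‖⁻¹ • c‖ + (‖c‖ - ‖a‖) := by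
          rw [abs_of_nonpos (by linarith), mul_one]; ring
  nlinarith [hb, hd, hcM, hna]

/-- Normalizing two nonzero vectors of norm at most `M` whose difference has norm more
than `M` yields unit vectors at distance more than `1`. -/
private theorem stmt3_normalize {E : Type*} [NormedAddCommGroup E] [NormedSpace ℝ E]
    {a c : E} {M : ℝ} (ha : a ≠ 0) (hc : c ≠ 0) (haM : ‖a‖ ≤ M) (hcM : ‖c‖ ≤ M)
    (hd : M < ‖a - c‖) : 1 < ‖‖a‖⁻¹ • a - ‖c‖⁻¹ • c‖ := by
  rcases le_total ‖a‖ ‖c‖ with hle | hle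
  · exact stmt3_normalize_aux ha hle hcM hd
  · rw [norm_sub_rev]
    exact stmt3_normalize_aux hc hle haM (by rwa [norm_sub_rev])

/-- Satellite bound: a family of balls containing a common point `b`, such that for each
pair the center of the smaller-radius ball lies outside the larger ball, has at most
`3 ^ dim` members. -/
private theorem stmt3_sat {E : Type*} [NormedAddCommGroup E] [NormedSpace ℝ E]
    [FiniteDimensional ℝ E] {ι : Type*} (q : ι → E) (ρ : ι → ℝ)
    (b : E) (T : Finset ι)
    (hin : ∀ i ∈ T, ‖q i - b‖ ≤ ρ i)
    (hsep : ∀ i ∈ T, ∀ k ∈ T, i ≠ k →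
      (ρ k ≤ ρ i ∧ ρ i < ‖q k - q i‖) ∨ (ρ i ≤ ρ k ∧ ρ k < ‖q i - q k‖)) :
    T.card ≤ 3 ^ finrank ℝ E := by
  classical
  have h3 : 1 ≤ 3 ^ finrank ℝ E := Nat.one_le_pow _ _ (by norm_num)
  by_cases hb : ∃ i ∈ T, q i = b
  · obtain ⟨i, hiT, hib⟩ := hb
    have hsub : T ⊆ {i} := by
      intro k hkT
      simp only [Finset.mem_singleton]
      by_contra hki
      rcases hsep i hiT k hkT (fun e => hki e.symm) with ⟨h1, h2⟩ | ⟨h1, h2⟩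
      · have : ‖q k - q i‖ ≤ ρ k := by rw [hib]; exact hin k hkT
        linarith
      · have : ‖q i - q k‖ ≤ ρ k := by rw [hib, norm_sub_rev]; exact hin k hkT
        linarith
    calc T.card ≤ ({i} : Finset ι).card := Finset.card_le_card hsub
      _ = 1 := Finset.card_singleton i
      _ ≤ 3 ^ finrank ℝ E := h3
  · push_neg at hb
    have hne : ∀ i ∈ T, q i - b ≠ 0 := fun i hi => sub_ne_zero.2 (hb i hi)
    set u : ι → E := fun i => ‖q i - b‖⁻¹ • (q i - b) with hu
    have husep : ∀ i ∈ T, ∀ k ∈ T, i ≠ k → 1 < ‖u i - u k‖ := by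
      intro i hi k hk hik
      rcases hsep i hi k hk hik with ⟨h1, h2⟩ | ⟨h1, h2⟩
      · have := stmt3_normalize (M := ρ i) (hne k hk) (hne i hi)
          (le_trans (hin k hk) h1) (hin i hi)
          (by rwa [sub_sub_sub_cancel_right])
        rwa [norm_sub_rev]
      · exact stmt3_normalize (M := ρ k) (hne i hi) (hne k hk)
          (le_trans (hin i hi) h1) (hin k hk)
          (by rwa [sub_sub_sub_cancel_right])
    have hinj : Set.InjOn u T := by
      intro i hi k hk hik
      by_contra hne'
      have := husep i hi k hk hne'
      rw [hik, sub_self, norm_zero] at this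
      linarith
    rw [← Finset.card_image_of_injOn hinj]
    apply stmt3_pack
    · intro c hc
      simp only [Finset.mem_image] at hc
      obtain ⟨i, hi, rfl⟩ := hc
      have : ‖u i‖ = 1 := by
        rw [hu]
        rw [norm_smul, Real.norm_eq_abs, abs_inv,
          abs_of_pos (norm_pos_iff.2 (hne i hi)), inv_mul_cancel₀ (norm_ne_zero_iff.2 (hne i hi))]
      exact this.le
    · intro c hc d hd hcd
      simp only [Finset.mem_image] at hc hd
      obtain ⟨i, hi, rfl⟩ := hc
      obtain ⟨k, hk, rfl⟩ := hd
      have hik : i ≠ k := fun e => hcd (by rw [e])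
      exact (husep i hi k hk hik).le

/-- Greedy selection of a subfamily of balls covering all centers, such that for each pair
of selected balls, the center of the smaller one is outside the bigger one. -/
private theorem stmt3_select {E : Type*} [NormedAddCommGroup E] {n : ℕ}
    (p : Fin n → E) (ρ : Fin n → ℝ) (hρ : ∀ i, 0 < ρ i) :
    ∀ (N : ℕ) (A : Finset (Fin n)), A.card ≤ N →
      ∃ S ⊆ A, (∀ j ∈ A, ∃ i ∈ S, ‖p j - p i‖ ≤ ρ i) ∧
        (∀ i ∈ S, ∀ k ∈ S, i ≠ k →
          (ρ k ≤ ρ i ∧ ρ i < ‖p k - p i‖) ∨ (ρ i ≤ ρ k ∧ ρ k < ‖p i - p k‖)) := by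
  classical
  intro N
  induction N with
  | zero =>
    intro A hA
    have : A = ∅ := Finset.card_eq_zero.1 (Nat.le_zero.1 hA)
    exact ⟨∅, by simp [this]⟩
  | succ N ih =>
    intro A hA
    rcases A.eq_empty_or_nonempty with rfl | hne
    · exact ⟨∅, by simp⟩
    obtain ⟨i0, hi0A, hi0max⟩ := A.exists_max_image ρ hne
    set A' : Finset (Fin n) := (A.erase i0).filter (fun j => ρ i0 < ‖p j - p i0‖) with hA'
    have hA'card : A'.card ≤ N := by
      have h1 : A' ⊆ A.erase i0 := Finset.filter_subset _ _
      have h2 : A'.card ≤ (A.erase i0).card := Finset.card_le_card h1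
      have h3 : (A.erase i0).card < A.card := Finset.card_erase_lt_of_mem hi0A
      omega
    obtain ⟨S', hS'sub, hS'cov, hS'sep⟩ := ih A' hA'card
    have hS'A : S' ⊆ A := fun i hi =>
      Finset.mem_of_mem_erase (Finset.mem_of_mem_filter i (hS'sub hi))
    have hS'A' : ∀ i ∈ S', ρ i0 < ‖p i - p i0‖ := fun i hi =>
      (Finset.mem_filter.1 (hS'sub hi)).2
    refine ⟨insert i0 S', Finset.insert_subset hi0A hS'A, ?_, ?_⟩
    · intro j hjA
      by_cases hj : ‖p j - p i0‖ ≤ ρ i0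
      · exact ⟨i0, Finset.mem_insert_self _ _, hj⟩
      · have hjne : j ≠ i0 := by
          intro e
          apply hj
          rw [e, sub_self, norm_zero]
          exact (hρ i0).le
        have hjA' : j ∈ A' := by
          rw [hA', Finset.mem_filter]
          exact ⟨Finset.mem_erase.2 ⟨hjne, hjA⟩, lt_of_not_ge hj⟩
        obtain ⟨i, hiS', hji⟩ := hS'cov j hjA'
        exact ⟨i, Finset.mem_insert_of_mem hiS', hji⟩
    · intro i hi k hk hik
      rcases Finset.mem_insert.1 hi with rfl | hiS'
      · rcases Finset.mem_insert.1 hk with rfl | hkS'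
        · exact absurd rfl hik
        · exact Or.inl ⟨hi0max k (hS'A hkS'), hS'A' k hkS'⟩
      · rcases Finset.mem_insert.1 hk with rfl | hkS'
        · exact Or.inr ⟨hi0max i (hS'A hiS'), hS'A' i hiS'⟩
        · exact hS'sep i hiS' k hkS' hik

/-- Local-to-global theorem in a `d`-dimensional real normed space: if in each
ball `K i` the number of blue points is at least `λ` times the number of red
points, then `λ * |R| ≤ 3 ^ d * |B|`. -/
theorem stmt_3 {E : Type*} [NormedAddCommGroup E] [NormedSpace ℝ E]
    [FiniteDimensional ℝ E] {d : ℕ} (hd : Module.finrank ℝ E = d)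
    {n : ℕ} (p : Fin n → E) (hp : Function.Injective p)
    (ρ : Fin n → ℝ) (hρ : ∀ i, 0 < ρ i)
    (B : Set E) (hB : B.Finite) (lam : ℝ) (hlam : 0 < lam)
    (h : ∀ i, lam * (Set.range p ∩ Metric.closedBall (p i) (ρ i)).ncard ≤
              ((B ∩ Metric.closedBall (p i) (ρ i)).ncard : ℝ)) :
    lam * n ≤ 3 ^ d * B.ncard := by
  classical
  subst hd
  set K : Fin n → Set E := fun i => Metric.closedBall (p i) (ρ i) with hK
  set Rf : Finset E := Finset.image p Finset.univ with hRf
  set Bf : Finset E := hB.toFinset with hBf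
  -- rewrite ncards as Finset cards
  have hRcard : ∀ i, (Set.range p ∩ K i).ncard = (Rf.filter (fun x => x ∈ K i)).card := by
    intro i
    have : Set.range p ∩ K i = ↑(Rf.filter (fun x => x ∈ K i)) := by
      ext x
      simp [hRf, Set.mem_inter_iff, Set.mem_range, eq_comm]
    rw [this, Set.ncard_coe_finset]
  have hBcard : ∀ i, (B ∩ K i).ncard = (Bf.filter (fun x => x ∈ K i)).card := by
    intro i
    have : B ∩ K i = ↑(Bf.filter (fun x => x ∈ K i)) := by
      ext x
      simp [hBf, Set.mem_inter_iff]
    rw [this, Set.ncard_coe_finset]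
  have hBtot : B.ncard = Bf.card := by
    rw [hBf, ← Set.ncard_coe_finset, hB.coe_toFinset]
  -- select the subfamily
  obtain ⟨S, -, hcov, hsep⟩ := stmt3_select p ρ hρ n Finset.univ (by simp)
  -- the assignment of each center to a selected ball containing it
  have hcov' : ∀ j : Fin n, ∃ i ∈ S, ‖p j - p i‖ ≤ ρ i := fun j =>
    hcov j (Finset.mem_univ j)
  choose σ hσS hσd using hcov'
  -- counting the red points
  have hn : (n : ℝ) ≤ ∑ i ∈ S, ((Rf.filter (fun x => x ∈ K i)).card : ℝ) := by
    have hfib : (Finset.univ : Finset (Fin n)).card =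
        ∑ i ∈ S, (Finset.univ.filter (fun j => σ j = i)).card :=
      Finset.card_eq_sum_card_fiberwise (fun j _ => hσS j)
    have hfle : ∀ i ∈ S, (Finset.univ.filter (fun j => σ j = i)).card ≤
        (Rf.filter (fun x => x ∈ K i)).card := by
      intro i hiS
      apply Finset.card_le_card_of_injOn p
      · intro j hj
        simp only [Finset.mem_coe, Finset.mem_filter, Finset.mem_univ, true_and] at hj
        rw [Finset.mem_coe, Finset.mem_filter]
        constructor
        · exact Finset.mem_image.2 ⟨j, Finset.mem_univ j, rfl⟩
        · rw [hK]
          simp only [Metric.mem_closedBall, dist_eq_norm]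
          rw [← hj]
          exact hσd j
      · intro a _ b _ hab
        exact hp hab
    calc (n : ℝ) = ((Finset.univ : Finset (Fin n)).card : ℝ) := by simp
      _ = ((∑ i ∈ S, (Finset.univ.filter (fun j => σ j = i)).card : ℕ) : ℝ) := by
          rw [← hfib]
      _ ≤ ((∑ i ∈ S, (Rf.filter (fun x => x ∈ K i)).card : ℕ) : ℝ) := by
          exact_mod_cast Finset.sum_le_sum hfle
      _ = ∑ i ∈ S, ((Rf.filter (fun x => x ∈ K i)).card : ℝ) := by push_cast; ring
  -- counting the blue points : bounded multiplicity on the selected family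
  have hmult : ∀ b ∈ Bf, (S.filter (fun i => b ∈ K i)).card ≤ 3 ^ finrank ℝ E := by
    intro b _
    apply stmt3_sat p ρ b
    · intro i hi
      have := (Finset.mem_filter.1 hi).2
      rw [hK] at this
      simp only [Metric.mem_closedBall, dist_eq_norm] at this
      rwa [norm_sub_rev]
    · intro i hi k hk hik
      exact hsep i (Finset.mem_filter.1 hi).1 k (Finset.mem_filter.1 hk).1 hik
  have hswap : ∑ i ∈ S, (Bf.filter (fun x => x ∈ K i)).card =
      ∑ b ∈ Bf, (S.filter (fun i => b ∈ K i)).card := by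
    simp only [Finset.card_filter]
    rw [Finset.sum_comm]
  have hblue : ∑ i ∈ S, ((Bf.filter (fun x => x ∈ K i)).card : ℝ) ≤
      3 ^ finrank ℝ E * Bf.card := by
    have : (∑ i ∈ S, (Bf.filter (fun x => x ∈ K i)).card : ℕ) ≤ Bf.card * 3 ^ finrank ℝ E := by
      rw [hswap]
      calc ∑ b ∈ Bf, (S.filter (fun i => b ∈ K i)).card
          ≤ ∑ _b ∈ Bf, 3 ^ finrank ℝ E := Finset.sum_le_sum hmult
        _ = Bf.card * 3 ^ finrank ℝ E := by rw [Finset.sum_const, smul_eq_mul]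
    calc ∑ i ∈ S, ((Bf.filter (fun x => x ∈ K i)).card : ℝ)
        = ((∑ i ∈ S, (Bf.filter (fun x => x ∈ K i)).card : ℕ) : ℝ) := by push_cast; ring
      _ ≤ ((Bf.card * 3 ^ finrank ℝ E : ℕ) : ℝ) := by exact_mod_cast this
      _ = 3 ^ finrank ℝ E * Bf.card := by push_cast; ring
  -- put everything together
  calc lam * n ≤ lam * ∑ i ∈ S, ((Rf.filter (fun x => x ∈ K i)).card : ℝ) := by
        apply mul_le_mul_of_nonneg_left hn hlam.le
    _ = ∑ i ∈ S, lam * ((Rf.filter (fun x => x ∈ K i)).card : ℝ) := Finset.mul_sum _ _ _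
    _ ≤ ∑ i ∈ S, ((Bf.filter (fun x => x ∈ K i)).card : ℝ) := by
        apply Finset.sum_le_sum
        intro i _
        have := h i
        rwa [hRcard i, hBcard i] at this
    _ ≤ 3 ^ finrank ℝ E * Bf.card := hblue
    _ = 3 ^ finrank ℝ E * B.ncard := by rw [hBtot]
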